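/- arXiv:2605.20933 — 2 statements merged into one kernel-verified Lean document; each statement's English description precedes it below -/
import Mathlib

section
/- Let n, m ≥ 1, let u, v ∈ ℝⁿ be nonzero vectors with uᵀv ≠ 0, let λ ∈ ℝ with λ ≠ 0, let f₁,…,f_m ∈ ℝ and weights w₁,…,w_m ≥ 0. Set cos θ = (uᵀv)/(‖u‖‖v‖) and β = sqrt((1 + cos²θ)/2). Consider the set S_sym^F = { |Σᵢ₌₁ᵐ fᵢ · (uᵀEᵢv)| / (|λ| · |uᵀv|) : E₁,…,E_m ∈ ℝ^{n×n} symmetric (Eᵢᵀ = Eᵢ) with ‖Eᵢ‖_F ≤ wᵢ for all i }. Then the greatest element of S_sym^F equals β · (Σᵢ₌₁ᵐ |fᵢ| wᵢ) · ‖u‖ · ‖v‖ / (|λ| · |uᵀv|): every element of S_sym^F is ≤ this value, and it is attained, e.g. by Eᵢ = sign(fᵢ) wᵢ (uvᵀ + vuᵀ)/(2β‖u‖‖v‖). -/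
open Matrix

/-- Euclidean norm of a vector in `ℝⁿ`. -/
noncomputable def e2norm {n : ℕ} (v : Fin n → ℝ) : ℝ := Real.sqrt (∑ i, v i ^ 2)

/-- Frobenius norm of a real matrix. -/
noncomputable def frobNorm {n m : ℕ} (M : Matrix (Fin n) (Fin m) ℝ) : ℝ :=
  Real.sqrt (∑ i, ∑ j, M i j ^ 2)

/-- Spectral norm: the supremum of `‖M x‖` over Euclidean-unit vectors `x`. -/
noncomputable def specNorm {n m : ℕ} (M : Matrix (Fin n) (Fin m) ℝ) : ℝ :=
  sSup ((fun x => e2norm (M.mulVec x)) '' {x : Fin m → ℝ | e2norm x = 1})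

lemma mul_sign' (x : ℝ) : x * Real.sign x = |x| := by
  rcases lt_trichotomy x 0 with h | h | h
  · simp [Real.sign_of_neg h, abs_of_neg h]
  · simp [h]
  · simp [Real.sign_of_pos h, abs_of_pos h]

lemma abs_sign_le_one (x : ℝ) : |Real.sign x| ≤ 1 := by
  rcases lt_trichotomy x 0 with h | h | h
  · simp [Real.sign_of_neg h]
  · simp [h]
  · simp [Real.sign_of_pos h]

lemma frob_cs {n : ℕ} (E S : Matrix (Fin n) (Fin n) ℝ) :
    |∑ i, ∑ j, E i j * S i j| ≤ frobNorm E * frobNorm S := by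
  have h1 : ∑ i, ∑ j, E i j * S i j = ∑ p : Fin n × Fin n, E p.1 p.2 * S p.1 p.2 :=
    (Fintype.sum_prod_type (fun p : Fin n × Fin n => E p.1 p.2 * S p.1 p.2)).symm
  have h2 : ∑ i, ∑ j, E i j ^ 2 = ∑ p : Fin n × Fin n, E p.1 p.2 ^ 2 :=
    (Fintype.sum_prod_type (fun p : Fin n × Fin n => E p.1 p.2 ^ 2)).symm
  have h3 : ∑ i, ∑ j, S i j ^ 2 = ∑ p : Fin n × Fin n, S p.1 p.2 ^ 2 :=
    (Fintype.sum_prod_type (fun p : Fin n × Fin n => S p.1 p.2 ^ 2)).symm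
  rw [frobNorm, frobNorm, h1, h2, h3]
  calc |∑ p : Fin n × Fin n, E p.1 p.2 * S p.1 p.2|
      = Real.sqrt ((∑ p : Fin n × Fin n, E p.1 p.2 * S p.1 p.2) ^ 2) :=
        (Real.sqrt_sq_eq_abs _).symm
    _ ≤ Real.sqrt ((∑ p : Fin n × Fin n, E p.1 p.2 ^ 2) * ∑ p : Fin n × Fin n, S p.1 p.2 ^ 2) :=
        Real.sqrt_le_sqrt (Finset.sum_mul_sq_le_sq_mul_sq _ _ _)
    _ = _ := Real.sqrt_mul (Finset.sum_nonneg fun _ _ => sq_nonneg _) _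

/-- The symmetrized outer product `(uvᵀ + vuᵀ)/2`. -/
noncomputable def symOut {n : ℕ} (u v : Fin n → ℝ) : Matrix (Fin n) (Fin n) ℝ :=
  Matrix.of fun i j => (u i * v j + v i * u j) / 2

lemma symOut_transpose {n : ℕ} (u v : Fin n → ℝ) : (symOut u v)ᵀ = symOut u v := by
  ext i j
  simp only [symOut, Matrix.transpose_apply, Matrix.of_apply]
  ring

lemma symOut_sumsq {n : ℕ} (u v : Fin n → ℝ) :
    ∑ i, ∑ j, symOut u v i j ^ 2
      = ((∑ i, u i ^ 2) * (∑ i, v i ^ 2) + (∑ i, u i * v i) ^ 2) / 2 := by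
  have h1 : (∑ i, u i ^ 2) * (∑ i, v i ^ 2) = ∑ i, ∑ j, u i ^ 2 * v j ^ 2 :=
    Finset.sum_mul_sum _ _ _ _
  have h1' : (∑ i, u i ^ 2) * (∑ i, v i ^ 2) = ∑ i, ∑ j, v i ^ 2 * u j ^ 2 := by
    rw [mul_comm]; exact Finset.sum_mul_sum _ _ _ _
  have h2 : (∑ i, u i * v i) ^ 2 = ∑ i, ∑ j, (u i * v i) * (u j * v j) := by
    rw [sq]; exact Finset.sum_mul_sum _ _ _ _
  calc ∑ i, ∑ j, symOut u v i j ^ 2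
      = ∑ i, ∑ j, (u i ^ 2 * v j ^ 2 / 4 + v i ^ 2 * u j ^ 2 / 4
          + (u i * v i) * (u j * v j) / 2) := by
        refine Finset.sum_congr rfl fun i _ => Finset.sum_congr rfl fun j _ => ?_
        simp only [symOut, Matrix.of_apply]; ring
    _ = (∑ i, ∑ j, u i ^ 2 * v j ^ 2) / 4 + (∑ i, ∑ j, v i ^ 2 * u j ^ 2) / 4
          + (∑ i, ∑ j, (u i * v i) * (u j * v j)) / 2 := by
        simp only [Finset.sum_add_distrib, Finset.sum_div]
    _ = _ := by rw [← h1, ← h1', ← h2]; ring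

lemma dot_symOut {n : ℕ} (u v : Fin n → ℝ) :
    u ⬝ᵥ (symOut u v).mulVec v
      = ((∑ i, u i ^ 2) * (∑ i, v i ^ 2) + (∑ i, u i * v i) ^ 2) / 2 := by
  have h1 : (∑ i, u i ^ 2) * (∑ i, v i ^ 2) = ∑ i, ∑ j, u i ^ 2 * v j ^ 2 :=
    Finset.sum_mul_sum _ _ _ _
  have h2 : (∑ i, u i * v i) ^ 2 = ∑ i, ∑ j, (u i * v i) * (u j * v j) := by
    rw [sq]; exact Finset.sum_mul_sum _ _ _ _
  calc u ⬝ᵥ (symOut u v).mulVec v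
      = ∑ i, ∑ j, u i * (symOut u v i j * v j) := by
        simp only [dotProduct, Matrix.mulVec, Finset.mul_sum]
    _ = ∑ i, ∑ j, (u i ^ 2 * v j ^ 2 / 2 + (u i * v i) * (u j * v j) / 2) := by
        refine Finset.sum_congr rfl fun i _ => Finset.sum_congr rfl fun j _ => ?_
        simp only [symOut, Matrix.of_apply]; ring
    _ = (∑ i, ∑ j, u i ^ 2 * v j ^ 2) / 2 + (∑ i, ∑ j, (u i * v i) * (u j * v j)) / 2 := by
        simp only [Finset.sum_add_distrib, Finset.sum_div]
    _ = _ := by rw [← h1, ← h2]; ring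

lemma sym_dot_eq {n : ℕ} (u v : Fin n → ℝ) (E : Matrix (Fin n) (Fin n) ℝ) (hE : Eᵀ = E) :
    u ⬝ᵥ E.mulVec v = ∑ i, ∑ j, E i j * symOut u v i j := by
  have hE' : ∀ i j, E j i = E i j := fun i j => congrFun (congrFun hE i) j
  have hswap : ∑ i, ∑ j, E i j * (v i * u j) = ∑ i, ∑ j, E i j * (u i * v j) := by
    rw [Finset.sum_comm]
    refine Finset.sum_congr rfl fun i _ => Finset.sum_congr rfl fun j _ => ?_
    rw [hE' i j]; ring
  have expand : ∑ i, ∑ j, E i j * symOut u v i j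
      = (∑ i, ∑ j, E i j * (u i * v j)) / 2 + (∑ i, ∑ j, E i j * (v i * u j)) / 2 := by
    calc ∑ i, ∑ j, E i j * symOut u v i j
        = ∑ i, ∑ j, (E i j * (u i * v j) / 2 + E i j * (v i * u j) / 2) := by
          refine Finset.sum_congr rfl fun i _ => Finset.sum_congr rfl fun j _ => ?_
          simp only [symOut, Matrix.of_apply]; ring
      _ = _ := by simp only [Finset.sum_add_distrib, Finset.sum_div]
  rw [expand, hswap]
  calc u ⬝ᵥ E.mulVec v = ∑ i, ∑ j, u i * (E i j * v j) := by
        simp only [dotProduct, Matrix.mulVec, Finset.mul_sum]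
    _ = ∑ i, ∑ j, E i j * (u i * v j) := by
        refine Finset.sum_congr rfl fun i _ => Finset.sum_congr rfl fun j _ => ?_; ring
    _ = _ := by ring

lemma frobNorm_smul {n : ℕ} (c : ℝ) (M : Matrix (Fin n) (Fin n) ℝ) :
    frobNorm (c • M) = |c| * frobNorm M := by
  rw [frobNorm, frobNorm]
  have : ∑ i, ∑ j, (c • M) i j ^ 2 = c ^ 2 * ∑ i, ∑ j, M i j ^ 2 := by
    simp only [Matrix.smul_apply, smul_eq_mul, mul_pow, Finset.mul_sum]
  rw [this, Real.sqrt_mul (sq_nonneg c), Real.sqrt_sq_eq_abs]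

/-- for symmetric perturbations measured in the Frobenius norm,
the eigenvalue condition number equals `β · κ` with
`β = sqrt((1 + cos²θ)/2)`, `cos θ = uᵀv/(‖u‖‖v‖)`. -/
theorem symmetric_eigenvalue_condition_number_frobenius
    {n m : ℕ} (hn : 1 ≤ n) (hm : 1 ≤ m)
    (u v : Fin n → ℝ) (hu : u ≠ 0) (hv : v ≠ 0) (huv : u ⬝ᵥ v ≠ 0)
    (lam : ℝ) (hlam : lam ≠ 0)
    (f w : Fin m → ℝ) (hw : ∀ i, 0 ≤ w i) :
    IsGreatest
      {s : ℝ | ∃ E : Fin m → Matrix (Fin n) (Fin n) ℝ,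
        (∀ i, (E i)ᵀ = E i) ∧
        (∀ i, frobNorm (E i) ≤ w i) ∧
        s = |∑ i, f i * (u ⬝ᵥ (E i).mulVec v)| / (|lam| * |u ⬝ᵥ v|)}
      (Real.sqrt ((1 + ((u ⬝ᵥ v) / (e2norm u * e2norm v)) ^ 2) / 2) *
        ((∑ i, |f i| * w i) * e2norm u * e2norm v / (|lam| * |u ⬝ᵥ v|))) := by
  -- basic positivity
  have hc : u ⬝ᵥ v = ∑ i, u i * v i := rfl
  have hA : 0 < ∑ i, u i ^ 2 := by
    obtain ⟨i, hi⟩ := Function.ne_iff.mp hu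
    exact Finset.sum_pos' (fun i _ => sq_nonneg _)
      ⟨i, Finset.mem_univ i, sq_pos_of_ne_zero hi⟩
  have hB : 0 < ∑ i, v i ^ 2 := by
    obtain ⟨i, hi⟩ := Function.ne_iff.mp hv
    exact Finset.sum_pos' (fun i _ => sq_nonneg _)
      ⟨i, Finset.mem_univ i, sq_pos_of_ne_zero hi⟩
  set K := Real.sqrt (((∑ i, u i ^ 2) * (∑ i, v i ^ 2) + (u ⬝ᵥ v) ^ 2) / 2) with hKdef
  have hKarg : 0 < ((∑ i, u i ^ 2) * (∑ i, v i ^ 2) + (u ⬝ᵥ v) ^ 2) / 2 :=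
    div_pos (add_pos_of_pos_of_nonneg (mul_pos hA hB) (sq_nonneg _)) two_pos
  have hKpos : 0 < K := Real.sqrt_pos.mpr hKarg
  have hKsq : K ^ 2 = ((∑ i, u i ^ 2) * (∑ i, v i ^ 2) + (u ⬝ᵥ v) ^ 2) / 2 :=
    Real.sq_sqrt hKarg.le
  have hfrobS : frobNorm (symOut u v) = K := by
    rw [frobNorm, symOut_sumsq, hKdef, hc]
  have hdotS : u ⬝ᵥ (symOut u v).mulVec v = K ^ 2 := by
    rw [dot_symOut, hKsq, hc]
  have hupos : 0 < e2norm u := Real.sqrt_pos.mpr hA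
  have hvpos : 0 < e2norm v := Real.sqrt_pos.mpr hB
  have hab2 : (e2norm u * e2norm v) ^ 2 = (∑ i, u i ^ 2) * (∑ i, v i ^ 2) := by
    rw [mul_pow, e2norm, e2norm, Real.sq_sqrt hA.le, Real.sq_sqrt hB.le]
  have hbeta : Real.sqrt ((1 + ((u ⬝ᵥ v) / (e2norm u * e2norm v)) ^ 2) / 2)
      * (e2norm u * e2norm v) = K := by
    have habpos : 0 < e2norm u * e2norm v := mul_pos hupos hvpos
    rw [← Real.sqrt_sq habpos.le, ← Real.sqrt_mul (by positivity), hKdef]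
    congr 1
    rw [← hab2]
    field_simp
    rw [Real.sq_sqrt (by positivity : (0:ℝ) ≤ e2norm u ^ 2 * e2norm v ^ 2)]
  have hD : 0 < |lam| * |u ⬝ᵥ v| := mul_pos (abs_pos.mpr hlam) (abs_pos.mpr huv)
  have hT : Real.sqrt ((1 + ((u ⬝ᵥ v) / (e2norm u * e2norm v)) ^ 2) / 2) *
        ((∑ i, |f i| * w i) * e2norm u * e2norm v / (|lam| * |u ⬝ᵥ v|))
      = (∑ i, |f i| * w i) * K / (|lam| * |u ⬝ᵥ v|) := by
    rw [← hbeta]; ring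
  rw [hT]
  constructor
  · -- membership: the maximizing perturbation
    refine ⟨fun i => (Real.sign (f i) * w i / K) • symOut u v, fun i => ?_, fun i => ?_, ?_⟩
    · rw [Matrix.transpose_smul, symOut_transpose]
    · rw [frobNorm_smul, hfrobS]
      have h1 : |Real.sign (f i) * w i / K| ≤ w i / K := by
        rw [abs_div, abs_mul, abs_of_nonneg (hw i), abs_of_pos hKpos]
        gcongr
        exact mul_le_of_le_one_left (hw i) (abs_sign_le_one _)
      calc |Real.sign (f i) * w i / K| * K ≤ (w i / K) * K :=
            mul_le_mul_of_nonneg_right h1 hKpos.le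
        _ = w i := div_mul_cancel₀ _ hKpos.ne'
    · -- value attained
      have hval : ∀ i : Fin m,
          f i * (u ⬝ᵥ ((Real.sign (f i) * w i / K) • symOut u v).mulVec v)
            = |f i| * w i * K := by
        intro i
        rw [Matrix.smul_mulVec, dotProduct_smul, smul_eq_mul, hdotS]
        rw [← mul_sign' (f i)]
        field_simp
      have hsum : ∑ i, f i * (u ⬝ᵥ ((fun i => (Real.sign (f i) * w i / K) • symOut u v) i).mulVec v)
          = (∑ i, |f i| * w i) * K := by
        rw [Finset.sum_mul]
        exact Finset.sum_congr rfl fun i _ => (hval i).trans (by ring)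
      have hnn : (0:ℝ) ≤ (∑ i, |f i| * w i) * K :=
        mul_nonneg (Finset.sum_nonneg fun i _ => mul_nonneg (abs_nonneg _) (hw i)) hKpos.le
      rw [hsum, abs_of_nonneg hnn]
  · -- upper bound
    rintro s ⟨E, hEsym, hEnorm, rfl⟩
    have hbound : ∀ i : Fin m, |u ⬝ᵥ (E i).mulVec v| ≤ w i * K := by
      intro i
      rw [sym_dot_eq u v (E i) (hEsym i)]
      calc |∑ a, ∑ b, E i a b * symOut u v a b| ≤ frobNorm (E i) * frobNorm (symOut u v) :=
            frob_cs _ _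
        _ ≤ w i * K := by
            rw [hfrobS]
            exact mul_le_mul_of_nonneg_right (hEnorm i) hKpos.le
    have hnum : |∑ i, f i * (u ⬝ᵥ (E i).mulVec v)| ≤ (∑ i, |f i| * w i) * K := by
      calc |∑ i, f i * (u ⬝ᵥ (E i).mulVec v)| ≤ ∑ i, |f i * (u ⬝ᵥ (E i).mulVec v)| :=
            Finset.abs_sum_le_sum_abs _ _
        _ = ∑ i, |f i| * |u ⬝ᵥ (E i).mulVec v| := by simp [abs_mul]
        _ ≤ ∑ i, |f i| * (w i * K) :=
            Finset.sum_le_sum fun i _ =>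
              mul_le_mul_of_nonneg_left (hbound i) (abs_nonneg _)
        _ = (∑ i, |f i| * w i) * K := by
            rw [Finset.sum_mul]
            exact Finset.sum_congr rfl fun i _ => by ring
    exact (div_le_div_iff_of_pos_right hD).mpr hnum
end

section
/- Let n, m ≥ 1, let J ∈ ℝ^{n×n}, let λ ∈ ℝ be a simple eigenvalue of J with eigenvector v ≠ 0, Jv = λv, let V ∈ ℝ^{n×(n−1)} have rank n−1 with Vᵀv = 0, and set Z = V (Vᵀ(J − λI)V)⁻¹ Vᵀ. Let f₁,…,f_m ∈ ℝ and weights w₁,…,w_m ≥ 0. Consider the set S = { ‖Z (Σᵢ₌₁ᵐ fᵢ Eᵢ v)‖ / ‖v‖ : E₁,…,E_m ∈ ℝ^{n×n} with ‖Eᵢ‖₂ ≤ wᵢ for all i }. Then ‖Z‖₂ · (Σᵢ₌₁ᵐ |fᵢ| wᵢ) is the greatest element of S: every element of S is ≤ this value, and it is attained, e.g. by Eᵢ = sign(fᵢ) wᵢ p vᵀ/‖v‖ where p is a unit vector with ‖Zp‖ = ‖Z‖₂. -/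
open Matrix

section Aux

lemma e2norm_eq' {k : ℕ} (x : Fin k → ℝ) :
    e2norm x = ‖(WithLp.equiv 2 (Fin k → ℝ)).symm x‖ := by
  simp [e2norm, EuclideanSpace.norm_eq, Real.norm_eq_abs, sq_abs]

lemma e2norm_nonneg' {k : ℕ} (x : Fin k → ℝ) : 0 ≤ e2norm x := Real.sqrt_nonneg _

lemma e2norm_smul' {k : ℕ} (c : ℝ) (x : Fin k → ℝ) : e2norm (c • x) = |c| * e2norm x := by
  rw [e2norm_eq', e2norm_eq', show (WithLp.equiv 2 (Fin k → ℝ)).symm (c • x)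
      = c • (WithLp.equiv 2 (Fin k → ℝ)).symm x from rfl, norm_smul, Real.norm_eq_abs]

lemma e2norm_pos' {k : ℕ} {x : Fin k → ℝ} (hx : x ≠ 0) : 0 < e2norm x := by
  rcases lt_or_eq_of_le (e2norm_nonneg' x) with h | h
  · exact h
  · exfalso; apply hx
    have hsum : ∑ i, x i ^ 2 = 0 := by
      have := congrArg (fun t => t ^ 2) h.symm
      simpa [e2norm, Real.sq_sqrt (Finset.sum_nonneg fun _ _ => sq_nonneg (x _))] using this
    funext i
    have h2 := (Finset.sum_eq_zero_iff_of_nonneg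
      (fun i (_ : i ∈ Finset.univ) => sq_nonneg (x i))).1 hsum i (Finset.mem_univ i)
    exact sq_eq_zero_iff.1 h2

lemma e2norm_sum_le' {k ι : ℕ} (y : Fin ι → Fin k → ℝ) :
    e2norm (∑ i, y i) ≤ ∑ i, e2norm (y i) := by
  rw [e2norm_eq']
  have h : (WithLp.equiv 2 (Fin k → ℝ)).symm (∑ i, y i)
      = ∑ i, (WithLp.equiv 2 (Fin k → ℝ)).symm (y i) :=
    map_sum (WithLp.linearEquiv 2 ℝ (Fin k → ℝ)).symm y Finset.univ
  rw [h]
  exact le_of_le_of_eq (norm_sum_le _ _)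
    (Finset.sum_congr rfl fun i _ => (e2norm_eq' _).symm)

lemma abs_dot_le' {k : ℕ} (x y : Fin k → ℝ) : |x ⬝ᵥ y| ≤ e2norm x * e2norm y := by
  rw [e2norm_eq', e2norm_eq']
  have := abs_real_inner_le_norm ((WithLp.equiv 2 (Fin k → ℝ)).symm x)
      ((WithLp.equiv 2 (Fin k → ℝ)).symm y)
  simpa [PiLp.inner_apply, RCLike.inner_apply, dotProduct, mul_comm] using this

lemma dot_self_eq' {k : ℕ} (x : Fin k → ℝ) : x ⬝ᵥ x = e2norm x ^ 2 := by
  rw [e2norm, Real.sq_sqrt (Finset.sum_nonneg fun _ _ => sq_nonneg (x _))]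
  simp [dotProduct, sq]

lemma e2norm_mulVec_le_frob' {n m : ℕ} (M : Matrix (Fin n) (Fin m) ℝ) (x : Fin m → ℝ)
    (hx : e2norm x = 1) :
    e2norm (M.mulVec x) ≤ Real.sqrt (∑ i, ∑ j, M i j ^ 2) := by
  have h1 : ∀ i, (M.mulVec x i) ^ 2 ≤ ∑ j, M i j ^ 2 := by
    intro i
    have hcs := abs_dot_le' (fun j => M i j) x
    rw [hx, mul_one] at hcs
    calc (M.mulVec x i) ^ 2 ≤ (e2norm (fun j => M i j)) ^ 2 := by
          rw [← sq_abs (M.mulVec x i)]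
          exact pow_le_pow_left₀ (abs_nonneg _) hcs 2
      _ = ∑ j, M i j ^ 2 := by
          rw [e2norm]; exact Real.sq_sqrt (Finset.sum_nonneg fun _ _ => sq_nonneg _)
  unfold e2norm
  exact Real.sqrt_le_sqrt (Finset.sum_le_sum fun i _ => h1 i)

lemma specNorm_bddAbove' {n m : ℕ} (M : Matrix (Fin n) (Fin m) ℝ) :
    BddAbove ((fun x => e2norm (M.mulVec x)) '' {x : Fin m → ℝ | e2norm x = 1}) := by
  refine ⟨Real.sqrt (∑ i, ∑ j, M i j ^ 2), ?_⟩
  rintro s ⟨x, hx, rfl⟩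
  exact e2norm_mulVec_le_frob' M x hx

lemma specNorm_nonneg' {n m : ℕ} (M : Matrix (Fin n) (Fin m) ℝ) : 0 ≤ specNorm M :=
  Real.sSup_nonneg (by rintro s ⟨x, hx, rfl⟩; exact Real.sqrt_nonneg _)

lemma sphere_nonempty' {k : ℕ} (hk : 1 ≤ k) : ∃ x : Fin k → ℝ, e2norm x = 1 := by
  haveI : NeZero k := ⟨by omega⟩
  refine ⟨Pi.single 0 1, ?_⟩
  simp [e2norm, Pi.single_apply, Finset.sum_ite_eq']

lemma specNorm_le' {n m : ℕ} (M : Matrix (Fin n) (Fin m) ℝ) (hm : 1 ≤ m) {C : ℝ}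
    (h : ∀ x, e2norm x = 1 → e2norm (M.mulVec x) ≤ C) : specNorm M ≤ C := by
  obtain ⟨x, hx⟩ := sphere_nonempty' (k := m) hm
  apply Real.sSup_le
  · rintro s ⟨y, hy, rfl⟩; exact h y hy
  · exact le_trans (e2norm_nonneg' _) (h x hx)

lemma e2norm_mulVec_le' {n m : ℕ} (M : Matrix (Fin n) (Fin m) ℝ) (x : Fin m → ℝ) :
    e2norm (M.mulVec x) ≤ specNorm M * e2norm x := by
  by_cases hx : x = 0
  · subst hx
    simp [Matrix.mulVec_zero, e2norm, mul_comm]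
  · have hpos := e2norm_pos' hx
    set c := e2norm x with hc
    have hu : e2norm (c⁻¹ • x) = 1 := by
      rw [e2norm_smul', abs_of_pos (inv_pos.2 hpos)]
      field_simp
      exact hc.symm
    have hle : e2norm (M.mulVec (c⁻¹ • x)) ≤ specNorm M :=
      le_csSup (specNorm_bddAbove' M) ⟨c⁻¹ • x, hu, rfl⟩
    rw [Matrix.mulVec_smul, e2norm_smul', abs_of_pos (inv_pos.2 hpos)] at hle
    calc e2norm (M.mulVec x) = c * (c⁻¹ * e2norm (M.mulVec x)) := by field_simp
      _ ≤ c * specNorm M := mul_le_mul_of_nonneg_left hle (le_of_lt hpos)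
      _ = specNorm M * c := mul_comm _ _

lemma e2norm_continuous' {k : ℕ} : Continuous (e2norm (n := k)) := by
  unfold e2norm
  exact Real.continuous_sqrt.comp (continuous_finset_sum _ fun i _ => (continuous_apply i).pow 2)

lemma specNorm_exists_max' {n m : ℕ} (hm : 1 ≤ m) (M : Matrix (Fin n) (Fin m) ℝ) :
    ∃ p : Fin m → ℝ, e2norm p = 1 ∧ e2norm (M.mulVec p) = specNorm M := by
  have hS : IsCompact {x : Fin m → ℝ | e2norm x = 1} := by
    apply Metric.isCompact_of_isClosed_isBounded
    · exact isClosed_eq e2norm_continuous' continuous_const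
    · apply Bornology.IsBounded.subset (Metric.isBounded_closedBall (x := (0 : Fin m → ℝ)) (r := 1))
      intro x hx
      simp only [Metric.mem_closedBall, dist_zero_right]
      rw [pi_norm_le_iff_of_nonneg zero_le_one]
      intro i
      rw [Real.norm_eq_abs, ← Real.sqrt_one, ← Real.sqrt_sq_eq_abs]
      apply Real.sqrt_le_sqrt
      calc x i ^ 2 ≤ ∑ j, x j ^ 2 :=
            Finset.single_le_sum (fun j _ => sq_nonneg (x j)) (Finset.mem_univ i)
        _ = 1 := by
            have hx' := hx
            simp only [Set.mem_setOf_eq, e2norm] at hx'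
            nlinarith [Real.sq_sqrt (Finset.sum_nonneg
              fun j (_ : j ∈ Finset.univ) => sq_nonneg (x j)),
              Real.sqrt_nonneg (∑ j, x j ^ 2)]
  have hcont : Continuous (fun x : Fin m → ℝ => e2norm (M.mulVec x)) := by
    apply e2norm_continuous'.comp
    show Continuous fun x : Fin m → ℝ => fun i => ∑ j, M i j * x j
    exact continuous_pi fun i =>
      continuous_finset_sum _ fun j _ => continuous_const.mul (continuous_apply j)
  obtain ⟨p, hp, hmax⟩ := hS.exists_isMaxOn
    (Set.nonempty_of_mem (sphere_nonempty' hm).choose_spec) hcont.continuousOn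
  refine ⟨p, hp, ?_⟩
  have hg : IsGreatest ((fun x => e2norm (M.mulVec x)) '' {x : Fin m → ℝ | e2norm x = 1})
      (e2norm (M.mulVec p)) := ⟨⟨p, hp, rfl⟩, by rintro s ⟨y, hy, rfl⟩; exact hmax hy⟩
  exact hg.csSup_eq.symm

lemma abs_sign_le' (t : ℝ) : |Real.sign t| ≤ 1 := by
  rcases Real.sign_apply_eq t with h | h | h <;> simp [h]

lemma mul_sign_eq_abs' (t : ℝ) : t * Real.sign t = |t| := by
  rcases lt_trichotomy t 0 with h | h | h
  · rw [Real.sign_of_neg h, abs_of_neg h]; ring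
  · simp [h]
  · rw [Real.sign_of_pos h, abs_of_pos h]; ring

end Aux

/-- the eigenvector condition number. With
`Z = V (Vᵀ(J-λI)V)⁻¹ Vᵀ`, the greatest value of
`‖Z Σᵢ fᵢ Eᵢ v‖ / ‖v‖` over `‖Eᵢ‖₂ ≤ wᵢ` equals `‖Z‖₂ Σᵢ |fᵢ| wᵢ`. -/
theorem eigenvector_condition_number
    {n m : ℕ} (hn : 1 ≤ n) (hm : 1 ≤ m)
    (J : Matrix (Fin n) (Fin n) ℝ) (lam : ℝ)
    (hsimple : Polynomial.rootMultiplicity lam J.charpoly = 1)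
    (v : Fin n → ℝ) (hv : v ≠ 0) (heig : J.mulVec v = lam • v)
    (V : Matrix (Fin n) (Fin (n - 1)) ℝ)
    (hrank : V.rank = n - 1) (hVv : Vᵀ.mulVec v = 0)
    (f w : Fin m → ℝ) (hw : ∀ i, 0 ≤ w i) :
    IsGreatest
      {s : ℝ | ∃ E : Fin m → Matrix (Fin n) (Fin n) ℝ,
        (∀ i, specNorm (E i) ≤ w i) ∧
        s = e2norm ((V * (Vᵀ * (J - lam • 1) * V)⁻¹ * Vᵀ).mulVec
              (∑ i, f i • (E i).mulVec v)) / e2norm v}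
      (specNorm (V * (Vᵀ * (J - lam • 1) * V)⁻¹ * Vᵀ) * ∑ i, |f i| * w i) := by
  set Z := V * (Vᵀ * (J - lam • 1) * V)⁻¹ * Vᵀ with hZ
  have hvpos : 0 < e2norm v := e2norm_pos' hv
  constructor
  · -- attained
    obtain ⟨p, hp1, hpmax⟩ := specNorm_exists_max' hn Z
    set c : Fin m → ℝ := fun i => Real.sign (f i) * w i / e2norm v with hcdef
    set E : Fin m → Matrix (Fin n) (Fin n) ℝ :=
      fun i => Matrix.of fun j k => c i * (p j * v k) with hEdef
    have hmv : ∀ i (x : Fin n → ℝ), (E i).mulVec x = (c i * (v ⬝ᵥ x)) • p := by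
      intro i x
      funext j
      show ∑ k, (c i * (p j * v k)) * x k = (c i * ∑ k, v k * x k) * p j
      rw [Finset.mul_sum, Finset.sum_mul]
      exact Finset.sum_congr rfl fun k _ => by ring
    refine ⟨E, ?_, ?_⟩
    · intro i
      apply specNorm_le' _ hn
      intro x hx
      rw [hmv i x, e2norm_smul', hp1, mul_one, abs_mul]
      have hdot : |v ⬝ᵥ x| ≤ e2norm v := by
        have := abs_dot_le' v x
        rwa [hx, mul_one] at this
      have hci : |c i| ≤ w i / e2norm v := by
        rw [hcdef]
        simp only [abs_div, abs_mul, abs_of_pos hvpos]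
        have h1 : |Real.sign (f i)| * |w i| ≤ w i := by
          calc |Real.sign (f i)| * |w i| ≤ 1 * |w i| :=
                mul_le_mul_of_nonneg_right (abs_sign_le' _) (abs_nonneg _)
            _ = w i := by rw [one_mul, abs_of_nonneg (hw i)]
        gcongr
      calc |c i| * |v ⬝ᵥ x| ≤ (w i / e2norm v) * e2norm v :=
            mul_le_mul hci hdot (abs_nonneg _) (le_trans (abs_nonneg _) hci)
        _ = w i := by field_simp
    · -- value
      have hsum : (∑ i, f i • (E i).mulVec v)
          = ((∑ i, |f i| * w i) * e2norm v) • p := by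
        rw [Finset.sum_mul, Finset.sum_smul]
        refine Finset.sum_congr rfl fun i _ => ?_
        rw [hmv i v, dot_self_eq', smul_smul]
        congr 1
        rw [hcdef]
        have : f i * (Real.sign (f i) * w i / e2norm v * e2norm v ^ 2)
            = (f i * Real.sign (f i)) * w i * e2norm v := by
          field_simp
        rw [this, mul_sign_eq_abs']
      rw [hsum, Matrix.mulVec_smul, e2norm_smul', hpmax,
        abs_of_nonneg (mul_nonneg (Finset.sum_nonneg fun i _ =>
          mul_nonneg (abs_nonneg _) (hw i)) hvpos.le)]
      field_simp
  · -- upper bound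
    rintro s ⟨E, hE, rfl⟩
    rw [div_le_iff₀ hvpos]
    have hstep : e2norm (∑ i, f i • (E i).mulVec v) ≤ (∑ i, |f i| * w i) * e2norm v := by
      calc e2norm (∑ i, f i • (E i).mulVec v)
          ≤ ∑ i, e2norm (f i • (E i).mulVec v) := e2norm_sum_le' _
        _ ≤ ∑ i, |f i| * (w i * e2norm v) := by
            refine Finset.sum_congr rfl (fun i _ => e2norm_smul' (f i) _) ▸
              Finset.sum_le_sum fun i _ => ?_
            refine mul_le_mul_of_nonneg_left ?_ (abs_nonneg _)
            calc e2norm ((E i).mulVec v) ≤ specNorm (E i) * e2norm v := e2norm_mulVec_le' _ _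
              _ ≤ w i * e2norm v := mul_le_mul_of_nonneg_right (hE i) hvpos.le
        _ = (∑ i, |f i| * w i) * e2norm v := by
            rw [Finset.sum_mul]
            exact Finset.sum_congr rfl fun i _ => by ring
    calc e2norm (Z.mulVec (∑ i, f i • (E i).mulVec v))
        ≤ specNorm Z * e2norm (∑ i, f i • (E i).mulVec v) := e2norm_mulVec_le' _ _
      _ ≤ specNorm Z * ((∑ i, |f i| * w i) * e2norm v) :=
          mul_le_mul_of_nonneg_left hstep (specNorm_nonneg' _)
      _ = specNorm Z * (∑ i, |f i| * w i) * e2norm v := by ring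
end
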